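/- Let (X,◁) be a finite quandle with r orbits. If its structure group G(X,◁) is abelian, then G(X,◁) is free abelian of rank r, i.e. isomorphic to ℤ^r. -/

import Mathlib

variable {X : Type*}

/-- Quandle axioms for a binary operation `op` (right-translation convention):
self-distributivity, bijectivity of right translations, idempotence. -/
structure IsQuandleOp (op : X → X → X) : Prop where
  sd : ∀ a b c, op (op a b) c = op (op a c) (op b c)
  bij : ∀ b, Function.Bijective fun a => op a b
  idem : ∀ a, op a a = a

/-- A quandle operation is abelian if `(a ◁ b) ◁ c = (a ◁ c) ◁ b`. -/
def IsAbelianOp (op : X → X → X) : Prop :=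
  ∀ a b c, op (op a b) c = op (op a c) b

/-- The smallest equivalence relation identifying `a` with `op a b`. -/
def orbitRel (op : X → X → X) : X → X → Prop :=
  Relation.EqvGen fun a b => ∃ c, op a c = b

/-- The setoid of orbits of a quandle. -/
def orbitSetoid (op : X → X → X) : Setoid X :=
  ⟨orbitRel op, Relation.EqvGen.is_equivalence _⟩

/-- The relators `g_a g_b (g_b g_{a ◁ b})⁻¹` of the structure group. -/
def structureRels (op : X → X → X) : Set (FreeGroup X) :=
  {w | ∃ a b : X,
    w = FreeGroup.of a * FreeGroup.of b * (FreeGroup.of b * FreeGroup.of (op a b))⁻¹}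

/-- The structure group `⟨g_a, a ∈ X | g_a g_b = g_b g_{a ◁ b}⟩` of a quandle. -/
abbrev StructureGroup (op : X → X → X) : Type _ := PresentedGroup (structureRels op)

/-- Basic relation in the structure group. -/
lemma structureGroup_rel (op : X → X → X) (a b : X) :
    (PresentedGroup.of a * PresentedGroup.of b : StructureGroup op)
      = PresentedGroup.of b * PresentedGroup.of (op a b) := by
  have hmem : (FreeGroup.of a * FreeGroup.of b * (FreeGroup.of b * FreeGroup.of (op a b))⁻¹)
      ∈ Subgroup.normalClosure (structureRels op) :=
    Subgroup.subset_normalClosure ⟨a, b, rfl⟩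
  have h1 : (QuotientGroup.mk' (Subgroup.normalClosure (structureRels op)))
      (FreeGroup.of a * FreeGroup.of b * (FreeGroup.of b * FreeGroup.of (op a b))⁻¹) = 1 := by
    rw [QuotientGroup.mk'_apply, QuotientGroup.eq_one_iff]; exact hmem
  rw [map_mul, map_inv, map_mul, map_mul] at h1
  have h2 := mul_eq_one_iff_eq_inv.mp h1
  rw [inv_inv] at h2; exact h2

theorem structureGroup_free_abelian {X : Type*} [Finite X] (op : X → X → X)
    (hq : IsQuandleOp op) (r : ℕ)
    (horb : Nat.card (Quotient (orbitSetoid op)) = r)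
    (hcomm : ∀ g h : StructureGroup op, g * h = h * g) :
    Nonempty (StructureGroup op ≃* Multiplicative (Fin r → ℤ)) := by
  classical
  letI : CommGroup (StructureGroup op) :=
    { (inferInstance : Group (StructureGroup op)) with mul_comm := hcomm }
  set Q := Quotient (orbitSetoid op) with hQ
  haveI : Fintype Q := Fintype.ofFinite Q
  -- of a = of b when a, b in same orbit (uses commutativity)
  have hwell : ∀ a b : X, orbitRel op a b →
      (PresentedGroup.of a : StructureGroup op) = PresentedGroup.of b := by
    intro a b h
    induction h with
    | rel a b hab =>
        obtain ⟨c, rfl⟩ := hab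
        have := structureGroup_rel op a c
        rw [hcomm (PresentedGroup.of a) (PresentedGroup.of c)] at this
        exact mul_left_cancel this
    | refl => rfl
    | symm _ _ _ ih => exact ih.symm
    | trans _ _ _ _ _ ih1 ih2 => exact ih1.trans ih2
  -- γ : Q → G
  set γ : Q → StructureGroup op := Quotient.lift (fun a => PresentedGroup.of a) hwell with hγ
  -- φ : G →* Multiplicative (Q → ℤ)
  have hrel : ∀ w ∈ structureRels op,
      FreeGroup.lift (fun a : X => Multiplicative.ofAdd (Pi.single (⟦a⟧ : Q) (1 : ℤ))) w
        = (1 : Multiplicative (Q → ℤ)) := by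
    rintro w ⟨a, b, rfl⟩
    have hab : (⟦a⟧ : Q) = ⟦op a b⟧ := Quotient.sound (Relation.EqvGen.rel _ _ ⟨b, rfl⟩)
    simp only [map_mul, map_inv, FreeGroup.lift_apply_of, hab, mul_inv_rev, ← ofAdd_neg,
      ← ofAdd_add, ofAdd_eq_one]
    abel
  set φ : StructureGroup op →* Multiplicative (Q → ℤ) := PresentedGroup.toGroup hrel with hφ
  have hφof : ∀ a : X, φ (PresentedGroup.of a) = Multiplicative.ofAdd (Pi.single (⟦a⟧ : Q) (1 : ℤ)) :=
    fun a => PresentedGroup.toGroup.of hrel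
  -- ψ : Multiplicative (Q → ℤ) →* G
  set ψ : Multiplicative (Q → ℤ) →* StructureGroup op :=
    MonoidHom.mk' (fun f => ∏ q : Q, γ q ^ (Multiplicative.toAdd f q))
      (by
        intro f g
        simp only [toAdd_mul, Pi.add_apply, zpow_add]
        exact Finset.prod_mul_distrib) with hψ
  -- left inverse
  have hψφ : ∀ x : StructureGroup op, ψ (φ x) = x := by
    intro x
    have hx : x ∈ Subgroup.closure (Set.range (PresentedGroup.of : X → StructureGroup op)) := by
      rw [PresentedGroup.closure_range_of]; exact Subgroup.mem_top x
    refine Subgroup.closure_induction (p := fun y _ => ψ (φ y) = y) ?_ ?_ ?_ ?_ hx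
    · rintro _ ⟨a, rfl⟩
      rw [hφof, hψ]
      simp only [MonoidHom.mk'_apply, toAdd_ofAdd]
      rw [Fintype.prod_eq_single (⟦a⟧ : Q) (fun q hne => by
        rw [Pi.single_eq_of_ne hne, zpow_zero])]
      simp [γ]; rfl
    · simp
    · intro a b _ _ ha hb; rw [map_mul, map_mul, ha, hb]
    · intro a _ ha; rw [map_inv, map_inv, ha]
  -- φ (γ q) = single q 1
  have hφγ : ∀ q : Q, φ (γ q) = Multiplicative.ofAdd (Pi.single q (1 : ℤ)) := by
    intro q
    induction q using Quotient.inductionOn with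
    | h a => exact hφof a
  -- right inverse
  have hφψ : ∀ f : Multiplicative (Q → ℤ), φ (ψ f) = f := by
    intro f
    show φ (∏ q : Q, γ q ^ (Multiplicative.toAdd f q)) = f
    rw [map_prod]
    simp only [map_zpow, hφγ]
    have : ∀ q : Q, (Multiplicative.ofAdd (Pi.single q (1 : ℤ))) ^ (Multiplicative.toAdd f q)
        = Multiplicative.ofAdd ((Pi.single q (Multiplicative.toAdd f q) : Q → ℤ)) := by
      intro q
      rw [← ofAdd_zsmul]
      congr 1
      funext x
      by_cases hx : x = q <;> simp [Pi.single_apply, hx]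
    simp only [this, ← ofAdd_sum, Finset.univ_sum_single, ofAdd_toAdd]
  -- assemble first equiv
  have e1 : StructureGroup op ≃* Multiplicative (Q → ℤ) :=
    { toFun := φ, invFun := ψ, left_inv := hψφ, right_inv := hφψ, map_mul' := φ.map_mul }
  -- Q ≃ Fin r
  have hcard : Fintype.card Q = r := by rw [← Nat.card_eq_fintype_card]; exact horb
  have eQ : Q ≃ Fin r := Fintype.equivFinOfCardEq hcard
  have e2 : (Q → ℤ) ≃+ (Fin r → ℤ) :=
    { Equiv.piCongrLeft' (fun _ => ℤ) eQ with
      map_add' := fun f g => rfl }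
  exact ⟨e1.trans (AddEquiv.toMultiplicative e2)⟩
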